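/- Let C be a code in F_2^n with covering radius ρ containing the all-zero vector 0, such that C_ρ = 1 + C. Then every nonzero codeword γ ∈ C satisfies wt(γ) ≤ n − ρ. -/
import Mathlib


/-- Vertices of the binary Hamming graph of length `n`, identified with `F_2^n`. -/
abbrev V (n : ℕ) := Fin n → ZMod 2

/-- Distance of a vertex `α` from a code `C`: `d(α,C) = min_{β ∈ C} d(α,β)`. -/
noncomputable def distTo {n : ℕ} (C : Set (V n)) (α : V n) : ℕ :=
  sInf (hammingDist α '' C)

/-- Covering radius of a code: the maximum over all vertices of the distance to the code. -/
noncomputable def coveringRadius {n : ℕ} (C : Set (V n)) : ℕ :=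
  sSup (Set.range (distTo C))

/-- A code `C` is completely regular if for every `i` and `k`, the number of codewords at
Hamming distance `k` from a vertex `ν` with `d(ν,C) = i` depends only on `i` and `k`. -/
def CompletelyRegular {n : ℕ} (C : Set (V n)) : Prop :=
  ∀ (i k : ℕ) (ν μ : V n), distTo C ν = i → distTo C μ = i →
    {β ∈ C | hammingDist ν β = k}.ncard = {β ∈ C | hammingDist μ β = k}.ncard

/-- `δ` is the minimum distance of `C`: the least Hamming distance between distinct codewords. -/
def IsMinDist {n : ℕ} (C : Set (V n)) (δ : ℕ) : Prop :=
  (∀ α ∈ C, ∀ β ∈ C, α ≠ β → δ ≤ hammingDist α β) ∧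
  (∃ α ∈ C, ∃ β ∈ C, α ≠ β ∧ hammingDist α β = δ)

/-- If `0 ∈ C` and `C_ρ = 1 + C` where `ρ` is the covering radius, then every nonzero
codeword has weight at most `n - ρ`. -/
theorem stmt_3 {n : ℕ} (C : Set (V n)) (h0 : (0 : V n) ∈ C)
    (h : {α : V n | distTo C α = coveringRadius C} = (fun c : V n => 1 + c) '' C) :
    ∀ γ ∈ C, γ ≠ 0 → hammingNorm γ ≤ n - coveringRadius C := by
  intro γ hγ _
  have hmem : (1 : V n) + γ ∈ {α : V n | distTo C α = coveringRadius C} := by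
    rw [h]; exact ⟨γ, hγ, rfl⟩
  have hd : distTo C ((1 : V n) + γ) = coveringRadius C := hmem
  have hle : coveringRadius C ≤ hammingDist ((1 : V n) + γ) 0 := by
    rw [← hd]
    exact Nat.sInf_le ⟨0, h0, rfl⟩
  have key : ∀ x : ZMod 2, ((1 : ZMod 2) + x ≠ 0) ↔ x = 0 := by decide
  have hcomp : hammingDist ((1 : V n) + γ) 0 = n - hammingNorm γ := by
    rw [hammingDist_zero_right]
    unfold hammingNorm
    have hfilt : (Finset.univ.filter fun i => ((1 : V n) + γ) i ≠ 0)
        = (Finset.univ.filter fun i => γ i ≠ 0)ᶜ := by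
      ext i
      simp only [Finset.mem_filter, Finset.mem_compl, Finset.mem_univ, true_and,
        Pi.add_apply, Pi.one_apply, not_not]
      exact key (γ i)
    rw [hfilt, Finset.card_compl, Fintype.card_fin]
  have hn : hammingNorm γ ≤ n := by
    unfold hammingNorm
    calc (Finset.univ.filter fun i => γ i ≠ 0).card ≤ Finset.univ.card :=
          Finset.card_le_univ _
      _ = n := Fintype.card_fin n
  omega
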